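/- arXiv:1907.07163 — 4 statements merged into one kernel-verified Lean document; each statement's English description precedes it below -/
import Mathlib

section
/- Let (X,d) be a complete and separable metric space and m a non-negative Borel measure on X which is finite on bounded sets. Let k : X × X → (0,∞) be measurable with ∫ k(x,y) dm(y) = 1 for every x ∈ X, and set P f(x) := ∫ f(y)·k(x,y) dm(y). Assume that P satisfies the dimension-free Harnack inequality with constant c > 0, i.e. |P f(x)|^p ≤ P(|f|^p)(y) · exp(p·c·d(x,y)²/(2·(p−1))) for every p ∈ (1,∞), every x,y ∈ X and every f ∈ L¹(m) ∩ L∞(m), and that P is strong Feller, i.e. P g is continuous and bounded for every g ∈ L∞(m). Then for every f ∈ L¹(m) ∩ L∞(m) with f ≥ 0 m-a.e., every δ > 0 and every non-isolated point x ∈ X it holds limsup_{y→x} (Pf(y) − Pf(x))/d(x,y) ≤ δ·( P(f·log f)(x) − Pf(x)·log Pf(x) ) + (c/(2δ))·Pf(x), where 0·log 0 := 0. -/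
open MeasureTheory Metric Filter

lemma rpow_log_bound {M' : ℝ} (hM' : 1 ≤ M') {a p : ℝ} (ha0 : 0 ≤ a) (haM : a ≤ M')
    (hp1 : 1/2 ≤ p) (hp2 : p ≤ 3/2) :
    a ^ p * |Real.log a| ≤ 2 + M' ^ (2:ℝ) * |Real.log M'| := by
  have hC : 0 ≤ M' ^ (2:ℝ) * |Real.log M'| := by positivity
  rcases eq_or_lt_of_le ha0 with h0 | h0
  · rw [← h0, Real.zero_rpow (ne_of_gt (by linarith : (0:ℝ) < p)), zero_mul]
    positivity
  rcases le_total a 1 with h1 | h1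
  · have hle : a ^ p ≤ a ^ ((1:ℝ)/2) := Real.rpow_le_rpow_of_exponent_ge h0 h1 hp1
    have hlog : |Real.log a| = 2 * |Real.log (a ^ ((1:ℝ)/2))| := by
      rw [Real.log_rpow h0, abs_mul, abs_of_pos (by norm_num : (0:ℝ) < 1/2)]
      ring
    have h2 : |Real.log (a ^ ((1:ℝ)/2)) * a ^ ((1:ℝ)/2)| < 1 :=
      Real.abs_log_mul_self_lt _ (Real.rpow_pos_of_pos h0 _)
        (Real.rpow_le_one ha0 h1 (by norm_num))
    rw [abs_mul, abs_of_nonneg (Real.rpow_pos_of_pos h0 _).le] at h2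
    have h3 : a ^ p * |Real.log a| ≤ a ^ ((1:ℝ)/2) * (2 * |Real.log (a ^ ((1:ℝ)/2))|) := by
      rw [← hlog]
      exact mul_le_mul_of_nonneg_right hle (abs_nonneg _)
    nlinarith
  · have hle : a ^ p ≤ a ^ (2:ℝ) := Real.rpow_le_rpow_of_exponent_le h1 (by linarith)
    have hle2 : a ^ (2:ℝ) ≤ M' ^ (2:ℝ) := Real.rpow_le_rpow ha0 haM (by norm_num)
    have hlog : |Real.log a| ≤ |Real.log M'| := by
      rw [abs_of_nonneg (Real.log_nonneg h1), abs_of_nonneg (Real.log_nonneg hM')]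
      exact Real.log_le_log (by linarith) haM
    have : a ^ p * |Real.log a| ≤ M' ^ (2:ℝ) * |Real.log M'| := by
      apply mul_le_mul (hle.trans hle2) hlog (abs_nonneg _) (by positivity)
    linarith

lemma hasDerivAt_rpow_integral {X : Type*} [MeasurableSpace X] (m : Measure X)
    (f w : X → ℝ) (hf : AEStronglyMeasurable f m) (hw : Measurable w)
    (hwi : Integrable w m) (hw0 : ∀ y, 0 ≤ w y) (M : ℝ)
    (hfM : ∀ᵐ y ∂m, 0 ≤ f y ∧ f y ≤ M) :
    Integrable (fun y => f y ^ (1:ℝ) * Real.log (f y) * w y) m ∧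
    HasDerivAt (fun p : ℝ => ∫ y, f y ^ p * w y ∂m)
      (∫ y, f y ^ (1:ℝ) * Real.log (f y) * w y ∂m) 1 := by
  set M' : ℝ := max M 1 with hM'def
  have hM' : 1 ≤ M' := le_max_right _ _
  set C : ℝ := 2 + M' ^ (2:ℝ) * |Real.log M'| with hCdef
  have haem : ∀ p : ℝ, 0 ≤ p → AEStronglyMeasurable (fun y => f y ^ p * w y) m := fun p hp =>
    ((Real.continuous_rpow_const hp).comp_aestronglyMeasurable hf).mul hw.aestronglyMeasurable
  apply hasDerivAt_integral_of_dominated_loc_of_deriv_le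
    (F' := fun (p : ℝ) y => f y ^ p * Real.log (f y) * w y)
    (bound := fun y => C * w y) (s := Metric.ball 1 (1/2)) (Metric.ball_mem_nhds _ (by norm_num))
  · filter_upwards [Ioi_mem_nhds (by norm_num : (0:ℝ) < 1)] with p hp
    exact haem p (le_of_lt hp)
  · -- integrability of F 1
    apply Integrable.mono' (hwi.const_mul M') (haem 1 zero_le_one)
    filter_upwards [hfM] with y hy
    simp only [Real.norm_eq_abs, Real.rpow_one, abs_mul]
    rw [abs_of_nonneg (hw0 y), abs_of_nonneg hy.1]
    exact mul_le_mul_of_nonneg_right (hy.2.trans (le_max_left _ _)) (hw0 y)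
  · exact ((((Real.continuous_rpow_const zero_le_one).comp_aestronglyMeasurable
      hf).aemeasurable.mul
      (Real.measurable_log.comp_aemeasurable hf.aemeasurable)).mul
      hw.aemeasurable).aestronglyMeasurable
  · -- bound
    filter_upwards [hfM] with y hy p hp
    rw [Metric.mem_ball, Real.dist_eq] at hp
    have hp1 : 1/2 ≤ p := by cases abs_lt.1 hp; linarith
    have hp2 : p ≤ 3/2 := by cases abs_lt.1 hp; linarith
    rw [Real.norm_eq_abs, abs_mul, abs_mul, abs_of_nonneg (hw0 y),
      abs_of_nonneg (Real.rpow_nonneg hy.1 p)]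
    exact mul_le_mul_of_nonneg_right
      (rpow_log_bound hM' hy.1 (hy.2.trans (le_max_left _ _)) hp1 hp2) (hw0 y)
  · exact hwi.const_mul C
  · -- differentiability
    filter_upwards [hfM] with y hy p hp
    rw [Metric.mem_ball, Real.dist_eq] at hp
    have hp0 : 0 < p := by cases abs_lt.1 hp; linarith
    rcases eq_or_lt_of_le hy.1 with h0 | h0
    · have hzero : f y ^ p * Real.log (f y) * w y = 0 := by
        rw [← h0, Real.zero_rpow hp0.ne', zero_mul, zero_mul]
      rw [hzero]
      apply (hasDerivAt_const p (0:ℝ)).congr_of_eventuallyEq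
      filter_upwards [Ioi_mem_nhds hp0] with q hq
      rw [← h0, Real.zero_rpow (ne_of_gt hq), zero_mul]
    · exact ((Real.hasStrictDerivAt_const_rpow h0 p).hasDerivAt).mul_const (w y)

/-- **One-sided difference-quotient estimate** in the proof of the local logarithmic
Sobolev inequality.  Let `(X, d)` be a complete separable metric space, `m` a nonnegative
Borel measure which is finite on bounded sets, `k : X × X → (0,∞)` a measurable kernel
with `∫ k(x,y) dm(y) = 1` for every `x`, and `P f (x) := ∫ f(y) k(x,y) dm(y)`.
Assume the dimension-free Harnack inequality with constant `c > 0` and that `P` is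
strong Feller.  Then for every `f ∈ L¹ ∩ L∞(m)` with `f ≥ 0` m-a.e., every `δ > 0` and
every non-isolated point `x ∈ X`,
`limsup_{y → x} (Pf(y) - Pf(x))/d(x,y) ≤ δ (P(f log f)(x) - Pf(x) log Pf(x)) + (c/(2δ)) Pf(x)`
(with the convention `0 log 0 = 0`, realized by `Real.log 0 = 0`). -/
theorem difference_quotient_estimate
    {X : Type*} [MetricSpace X] [CompleteSpace X] [TopologicalSpace.SeparableSpace X]
    [MeasurableSpace X] [BorelSpace X] (m : Measure X)
    (hm : ∀ s : Set X, Bornology.IsBounded s → m s < ⊤)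
    (k : X → X → ℝ)
    (hk_meas : Measurable (fun p : X × X => k p.1 p.2))
    (hk_pos : ∀ x y, 0 < k x y)
    (hk_prob : ∀ x : X, ∫ y, k x y ∂m = 1)
    (P : (X → ℝ) → X → ℝ)
    (hP : ∀ (f : X → ℝ) (x : X), P f x = ∫ y, f y * k x y ∂m)
    (c : ℝ) (hc : 0 < c)
    (harnack : ∀ p : ℝ, 1 < p → ∀ x y : X, ∀ f : X → ℝ,
      Integrable f m → MemLp f ⊤ m →
      |P f x| ^ p ≤ P (fun z => |f z| ^ p) y *
        Real.exp (p * c * dist x y ^ 2 / (2 * (p - 1))))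
    (feller : ∀ g : X → ℝ, Measurable g → MemLp g ⊤ m →
      Continuous (P g) ∧ ∃ M : ℝ, ∀ x : X, |P g x| ≤ M) :
    ∀ f : X → ℝ, Integrable f m → MemLp f ⊤ m → (∀ᵐ y ∂m, 0 ≤ f y) →
      ∀ δ > (0 : ℝ), ∀ x : X, (nhdsWithin x {x}ᶜ).NeBot →
        Filter.limsup (fun y => (P f y - P f x) / dist x y) (nhdsWithin x {x}ᶜ)
          ≤ δ * (P (fun y => f y * Real.log (f y)) x - P f x * Real.log (P f x))
            + c / (2 * δ) * P f x := by
  intro f hfi hfb hf0 δ hδ x hx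
  -- basic facts about the kernel at `x`
  have hkx : Measurable (k x) := hk_meas.comp measurable_prodMk_left
  have hkx0 : ∀ y, 0 ≤ k x y := fun y => (hk_pos x y).le
  have hkxi : Integrable (k x) m := by
    by_contra h
    have := hk_prob x
    rw [integral_undef h] at this
    norm_num at this
  -- essential bound for f
  set M : ℝ := (eLpNormEssSup f m).toReal with hMdef
  have haef : ∀ᵐ y ∂m, 0 ≤ f y ∧ f y ≤ M := by
    have h1 : eLpNormEssSup f m < ⊤ := by
      have := hfb.2; rwa [eLpNorm_exponent_top] at this
    filter_upwards [hf0, ae_le_eLpNormEssSup (f := f) (μ := m)] with y h2 h3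
    refine ⟨h2, ?_⟩
    have h4 : ((‖f y‖₊ : ENNReal)).toReal ≤ M := ENNReal.toReal_mono h1.ne h3
    rw [ENNReal.coe_toReal, coe_nnnorm, Real.norm_eq_abs] at h4
    exact (le_abs_self _).trans h4
  -- integrability of f ⋅ k x
  have hfk : Integrable (fun y => f y * k x y) m := by
    apply Integrable.mono' (hkxi.const_mul M) (hfi.1.mul hkx.aestronglyMeasurable)
    filter_upwards [haef] with y hy
    have habs : |f y * k x y| = f y * k x y := abs_of_nonneg (mul_nonneg hy.1 (hkx0 y))
    simp only [Pi.mul_apply, Real.norm_eq_abs]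
    rw [habs]
    exact mul_le_mul_of_nonneg_right hy.2 (hkx0 y)
  have hPfx0 : 0 ≤ P f x := by
    rw [hP]
    apply integral_nonneg_of_ae
    filter_upwards [haef] with y hy
    exact mul_nonneg hy.1 (hkx0 y)
  rcases eq_or_lt_of_le hPfx0 with hzero | hpos
  · -- degenerate case : P f x = 0, so f = 0 a.e.
    have hfz : ∀ᵐ y ∂m, f y = 0 := by
      have h1 : (fun y => f y * k x y) =ᵐ[m] 0 := by
        apply (integral_eq_zero_iff_of_nonneg_ae _ hfk).1
        · rw [← hP f x]; exact hzero.symm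
        · filter_upwards [haef] with y hy; exact mul_nonneg hy.1 (hkx0 y)
      filter_upwards [h1] with y hy
      have := mul_eq_zero.1 hy
      rcases this with h | h
      · exact h
      · exact absurd h (hk_pos x y).ne'
    have hPz : ∀ z : X, P f z = 0 := by
      intro z
      rw [hP]
      apply integral_eq_zero_of_ae
      filter_upwards [hfz] with y hy
      simp [hy]
    have hPlz : P (fun y => f y * Real.log (f y)) x = 0 := by
      rw [hP]
      apply integral_eq_zero_of_ae
      filter_upwards [hfz] with y hy
      simp [hy]
    have hfun : (fun y => (P f y - P f x) / dist x y) = fun _ => (0:ℝ) := by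
      funext y; rw [hPz y, hPz x]; simp
    rw [hfun, limsup_const, hPlz, hPz x]
    simp
  -- main case : P f x > 0
  obtain ⟨hD_int, hderiv⟩ := hasDerivAt_rpow_integral m f (k x) hfi.1 hkx hkxi hkx0 M haef
  set φ : ℝ → ℝ := fun p => ∫ y, f y ^ p * k x y ∂m with hφdef
  set D : ℝ := ∫ y, f y ^ (1:ℝ) * Real.log (f y) * k x y ∂m with hDdef
  have hφ1 : φ 1 = P f x := by
    rw [hP]; simp only [hφdef, Real.rpow_one]
  have hD : D = P (fun y => f y * Real.log (f y)) x := by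
    rw [hP]; simp only [hDdef, Real.rpow_one]
  have hφpos : 0 < φ 1 := by rw [hφ1]; exact hpos
  -- positivity of φ near 1
  obtain ⟨ε, hε, hball⟩ : ∃ ε > 0, ∀ p : ℝ, dist p 1 < ε → 0 < φ p := by
    have h1 : ∀ᶠ p in nhds (1:ℝ), 0 < φ p :=
      hderiv.continuousAt.eventually (eventually_gt_nhds hφpos)
    obtain ⟨ε, hε, h2⟩ := Metric.eventually_nhds_iff.1 h1
    exact ⟨ε, hε, fun p hp => h2 hp⟩
  -- the comparison function and its derivative at 0
  set L : ℝ := δ * (P (fun y => f y * Real.log (f y)) x - P f x * Real.log (P f x))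
      + c / (2 * δ) * P f x with hLdef
  set h : ℝ → ℝ := fun d => Real.exp (Real.log (φ (1 + δ * d)) / (1 + δ * d)
      + c * d / (2 * δ)) with hhdef
  have hh0 : h 0 = P f x := by
    simp only [hhdef, mul_zero, add_zero, zero_div, div_one]
    rw [Real.exp_log hφpos, hφ1]
  have hhd : HasDerivAt h L 0 := by
    have h1 : HasDerivAt (fun d : ℝ => 1 + δ * d) δ 0 := by
      simpa using ((hasDerivAt_id (0:ℝ)).const_mul δ).const_add 1
    have h2 : HasDerivAt (fun d : ℝ => φ (1 + δ * d)) (D * δ) 0 := by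
      have h3 : HasDerivAt φ D (1 + δ * 0) := by
        rw [show (1:ℝ) + δ * 0 = 1 by ring]; exact hderiv
      exact HasDerivAt.comp 0 h3 h1
    have h3 : HasDerivAt (fun d : ℝ => Real.log (φ (1 + δ * d))) (D * δ / φ 1) 0 := by
      have h4 := h2.log (by
        rw [show (1:ℝ) + δ * 0 = 1 by ring]; exact hφpos.ne')
      rw [show (1:ℝ) + δ * 0 = 1 by ring] at h4
      exact h4
    have h4 : HasDerivAt (fun d : ℝ => Real.log (φ (1 + δ * d)) / (1 + δ * d))
        ((D * δ / φ 1 * (1 + δ * 0) - Real.log (φ (1 + δ * 0)) * δ) / (1 + δ * 0) ^ 2) 0 :=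
      h3.div h1 (by rw [show (1:ℝ) + δ * 0 = 1 by ring]; norm_num)
    have h5 : HasDerivAt (fun d : ℝ => c * d / (2 * δ)) (c / (2 * δ)) 0 := by
      have := ((hasDerivAt_id (0:ℝ)).const_mul c).div_const (2 * δ)
      simpa using this
    have h6 := (h4.add h5).exp
    have heq : Real.exp (Real.log (φ (1 + δ * 0)) / (1 + δ * 0) + c * 0 / (2 * δ)) *
        ((D * δ / φ 1 * (1 + δ * 0) - Real.log (φ (1 + δ * 0)) * δ) / (1 + δ * 0) ^ 2
          + c / (2 * δ)) = L := by
      rw [show (1:ℝ) + δ * 0 = 1 by ring]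
      simp only [mul_zero, zero_div, add_zero, div_one, one_pow]
      rw [Real.exp_log hφpos, hLdef, ← hD, ← hφ1]
      field_simp
    rw [← heq]
    exact h6
  -- key pointwise estimate
  have key : ∀ y : X, y ≠ x → dist x y * δ < ε → P f y ≤ h (dist x y) := by
    intro y hy hlt
    have hd0 : 0 < dist x y := dist_pos.2 (Ne.symm hy)
    set d : ℝ := dist x y with hddef
    set p : ℝ := 1 + δ * d with hpdef
    have hp1 : 1 < p := by
      have : 0 < δ * d := mul_pos hδ hd0
      simp only [hpdef]; linarith
    have hp0 : 0 < p := by linarith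
    have hφp : 0 < φ p := by
      apply hball
      rw [Real.dist_eq, hpdef]
      rw [show 1 + δ * d - 1 = δ * d by ring, abs_of_pos (mul_pos hδ hd0)]
      rw [mul_comm]; exact hlt
    have har := harnack p hp1 y x f hfi hfb
    have hPabs : P (fun z => |f z| ^ p) x = φ p := by
      rw [hP]
      apply integral_congr_ae
      filter_upwards [haef] with z hz
      rw [abs_of_nonneg hz.1]
    rw [hPabs, dist_comm y x, ← hddef] at har
    set E : ℝ := p * c * d ^ 2 / (2 * (p - 1)) with hEdef
    have step : |P f y| ≤ (φ p * Real.exp E) ^ (p⁻¹) := by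
      have h1 := Real.rpow_le_rpow (Real.rpow_nonneg (abs_nonneg _) p) har
        (by positivity : (0:ℝ) ≤ p⁻¹)
      rwa [← Real.rpow_mul (abs_nonneg _), mul_inv_cancel₀ hp0.ne', Real.rpow_one] at h1
    have heq : (φ p * Real.exp E) ^ (p⁻¹) = h d := by
      rw [Real.rpow_def_of_pos (mul_pos hφp (Real.exp_pos _)),
        Real.log_mul hφp.ne' (Real.exp_pos _).ne', Real.log_exp, hhdef]
      simp only
      congr 1
      have hpd : p - 1 = δ * d := by rw [hpdef]; ring
      rw [hEdef, hpd, ← hpdef]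
      field_simp
    calc P f y ≤ |P f y| := le_abs_self _
      _ ≤ (φ p * Real.exp E) ^ (p⁻¹) := step
      _ = h d := heq
  -- the bounding slope function converges to L
  have hdist : Tendsto (fun y => dist x y) (nhdsWithin x {x}ᶜ) (nhdsWithin (0:ℝ) {0}ᶜ) := by
    apply tendsto_nhdsWithin_of_tendsto_nhds_of_eventually_within
    · have h1 : Tendsto (fun y => dist x y) (nhds x) (nhds (dist x x)) :=
        (continuous_const.dist continuous_id).tendsto x
      rw [dist_self] at h1
      exact h1.mono_left nhdsWithin_le_nhds
    · filter_upwards [self_mem_nhdsWithin] with y hy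
      simp only [Set.mem_compl_iff, Set.mem_singleton_iff] at hy ⊢
      exact (dist_pos.2 (Ne.symm hy)).ne'
  have hslope : Tendsto (fun y => slope h 0 (dist x y)) (nhdsWithin x {x}ᶜ) (nhds L) :=
    (hasDerivAt_iff_tendsto_slope.1 hhd).comp hdist
  -- eventual comparison
  have hbound_ev : ∀ᶠ y in nhdsWithin x {x}ᶜ,
      (P f y - P f x) / dist x y ≤ slope h 0 (dist x y) := by
    have hev1 : ∀ᶠ y in nhdsWithin x {x}ᶜ, dist x y * δ < ε := by
      have h1 : Tendsto (fun y => dist x y) (nhdsWithin x {x}ᶜ) (nhds 0) :=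
        hdist.mono_right nhdsWithin_le_nhds
      have h2 : ∀ᶠ y in nhdsWithin x {x}ᶜ, dist x y < ε / δ :=
        h1.eventually_lt_const (by positivity)
      filter_upwards [h2] with y hy
      rw [← lt_div_iff₀ hδ]
      exact hy
    have hev2 : ∀ᶠ y in nhdsWithin x {x}ᶜ, y ≠ x := by
      filter_upwards [self_mem_nhdsWithin] with y hy
      simpa using hy
    filter_upwards [hev1, hev2] with y h1 h2
    have hd0 : 0 < dist x y := dist_pos.2 (Ne.symm h2)
    rw [slope_def_field, sub_zero, hh0]
    gcongr
    exact key y h2 h1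
  -- conclude via limsup
  by_cases hcb : IsCoboundedUnder (· ≤ ·) (nhdsWithin x {x}ᶜ)
      (fun y => (P f y - P f x) / dist x y)
  · have hbd : IsBoundedUnder (· ≤ ·) (nhdsWithin x {x}ᶜ)
        (fun y => slope h 0 (dist x y)) := hslope.isBoundedUnder_le
    calc Filter.limsup (fun y => (P f y - P f x) / dist x y) (nhdsWithin x {x}ᶜ)
        ≤ Filter.limsup (fun y => slope h 0 (dist x y)) (nhdsWithin x {x}ᶜ) :=
          limsup_le_limsup hbound_ev hcb hbd
      _ = L := hslope.limsup_eq
  · -- the quotient is unbounded below; its limsup is the junk value 0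
    have hJ : P f x * Real.log (P f x) ≤ P (fun y => f y * Real.log (f y)) x := by
      rw [← hD, ← hφ1]
      have hInt2 : Integrable (fun y =>
          Real.log (φ 1) * (f y * k x y) + f y * k x y - φ 1 * k x y) m :=
        ((hfk.const_mul (Real.log (φ 1))).add hfk).sub (hkxi.const_mul (φ 1))
      have hmono : ∀ᵐ y ∂m, Real.log (φ 1) * (f y * k x y) + f y * k x y - φ 1 * k x y
          ≤ f y ^ (1:ℝ) * Real.log (f y) * k x y := by
        filter_upwards [haef] with y hy
        rw [Real.rpow_one]
        rcases eq_or_lt_of_le hy.1 with h0 | h0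
        · rw [← h0]
          simp only [zero_mul, mul_zero, zero_add, zero_sub, zero_mul]
          nlinarith [mul_nonneg hφpos.le (hkx0 y)]
        · have hlog := Real.log_le_sub_one_of_pos (div_pos hφpos h0)
          rw [Real.log_div hφpos.ne' h0.ne'] at hlog
          have hkey : f y * Real.log (φ 1) + f y - φ 1 ≤ f y * Real.log (f y) := by
            have := mul_le_mul_of_nonneg_left hlog h0.le
            rw [mul_sub] at this
            have hdiv : f y * (φ 1 / f y) = φ 1 := by field_simp
            nlinarith
          nlinarith [mul_le_mul_of_nonneg_right hkey (hkx0 y)]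
      have hle := integral_mono_ae hInt2 hD_int hmono
      have hA : Integrable (fun y => Real.log (φ 1) * (f y * k x y) + f y * k x y) m :=
        (hfk.const_mul _).add hfk
      have hB : Integrable (fun y => φ 1 * k x y) m := hkxi.const_mul _
      have hA1 : Integrable (fun y => Real.log (φ 1) * (f y * k x y)) m := hfk.const_mul _
      have hval : ∫ y, (Real.log (φ 1) * (f y * k x y) + f y * k x y - φ 1 * k x y) ∂m
          = φ 1 * Real.log (φ 1) := by
        rw [integral_sub hA hB, integral_add hA1 hfk, integral_const_mul, integral_const_mul]
        have hfkP : ∫ y, f y * k x y ∂m = φ 1 := by rw [← hP f x, hφ1]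
        rw [hfkP, hk_prob x]
        ring
      rw [hval] at hle
      exact hle
    have hL0 : 0 ≤ L := by
      rw [hLdef]
      have h1 : 0 ≤ c / (2 * δ) * P f x := by positivity
      nlinarith
    have hlim : Filter.limsup (fun y => (P f y - P f x) / dist x y)
        (nhdsWithin x {x}ᶜ) = 0 := by
      rw [Filter.limsup_eq]
      apply Real.sInf_of_not_bddBelow
      intro hbdd
      apply hcb
      obtain ⟨b, hb⟩ := hbdd
      refine ⟨b, fun a ha => hb ?_⟩
      exact ha
    rw [hlim]
    exact hL0
end

section
/- Let m be a σ-finite measure on a measurable space, let C ≥ 0, and let u : [0,∞) → L¹(m) ∩ L²(m) satisfy: (a) t ↦ u_t is continuous as a map from [0,∞) into L²(m); (b) |u_t| ≤ C m-a.e. for every t ≥ 0; (c) the L¹-norm ‖u_t‖_{L¹(m)} equals ‖u_0‖_{L¹(m)} for every t ≥ 0. Then for every p ∈ [1,∞) the map t ↦ u_t is continuous as a map from [0,∞) into L^p(m). -/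
open MeasureTheory Filter
open scoped ENNReal

/-- **Scheffé's lemma** (sequential form): if `f n → g` a.e., all functions are integrable,
and `∫ |f n| = ∫ |g|` for all `n`, then `∫ |f n - g| → 0`. -/
lemma scheffe_aux {α : Type*} [MeasurableSpace α] {m : Measure α} {f : ℕ → α → ℝ} {g : α → ℝ}
    (hf : ∀ n, Integrable (f n) m) (hg : Integrable g m)
    (hae : ∀ᵐ x ∂m, Tendsto (fun n => f n x) atTop (nhds (g x)))
    (hmass : ∀ n, ∫ x, |f n x| ∂m = ∫ x, |g x| ∂m) :
    Tendsto (fun n => ∫ x, |f n x - g x| ∂m) atTop (nhds 0) := by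
  have hfg : ∀ n, Integrable (fun x => f n x - g x) m := fun n => (hf n).sub hg
  have hdct : Tendsto (fun n => ∫ x, (|g x| + |f n x - g x| - |f n x|) ∂m) atTop
      (nhds (∫ x, (0 : ℝ) ∂m)) := by
    apply tendsto_integral_of_dominated_convergence (fun x => 2 * |g x|)
    · intro n
      exact ((hg.abs.add (hfg n).abs).sub (hf n).abs).aestronglyMeasurable
    · exact hg.abs.const_mul 2
    · intro n
      filter_upwards with x
      have h1 : |f n x - g x| ≤ |f n x| + |g x| := abs_sub (f n x) (g x)
      have h2 : |f n x| ≤ |f n x - g x| + |g x| := by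
        have := abs_sub (f n x - g x) (-g x)
        simpa using abs_sub_abs_le_abs_sub (f n x) (g x) |>.trans (le_abs_self _) |> fun h => by
          nlinarith [abs_nonneg (g x), abs_sub_abs_le_abs_sub (f n x) (g x),
            neg_abs_le (f n x - g x), le_abs_self (f n x - g x)]
      rw [Real.norm_eq_abs, abs_le]
      constructor <;> nlinarith [abs_nonneg (g x)]
    · filter_upwards [hae] with x hx
      have h1 : Tendsto (fun n => |f n x - g x|) atTop (nhds 0) := by
        simpa [sub_self] using (hx.sub_const (g x)).abs
      have h2 : Tendsto (fun n => |f n x|) atTop (nhds |g x|) := hx.abs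
      simpa using ((tendsto_const_nhds (x := |g x|)).add h1).sub h2
  have heq : ∀ n, ∫ x, (|g x| + |f n x - g x| - |f n x|) ∂m = ∫ x, |f n x - g x| ∂m := by
    intro n
    have hA : Integrable (fun x => |g x| + |f n x - g x|) m := hg.abs.add (hfg n).abs
    rw [integral_sub hA (hf n).abs, integral_add hg.abs (hfg n).abs, hmass n]
    ring
  simpa [heq, integral_zero] using hdct

/-- **L^p-continuity of a bounded, mass-preserving, L²-continuous curve.**
Let `m` be a σ-finite measure, `C ≥ 0`, and `u : [0,∞) → L¹(m) ∩ L²(m)` be such that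
(a) `t ↦ u t` is continuous into `L²(m)`;
(b) `|u t| ≤ C` m-a.e. for every `t ≥ 0`;
(c) `‖u t‖_{L¹(m)} = ‖u 0‖_{L¹(m)}` for every `t ≥ 0`.
Then for every `p ∈ [1,∞)` the map `t ↦ u t` is continuous into `L^p(m)`. -/
theorem lp_continuity
    {α : Type*} [MeasurableSpace α] (m : Measure α) [SigmaFinite m]
    (C : ℝ) (hC : 0 ≤ C) (u : ℝ → α → ℝ)
    (hu_mem : ∀ t : ℝ, 0 ≤ t → Integrable (u t) m ∧ MemLp (u t) 2 m)
    (hu_cont : ∀ t : ℝ, 0 ≤ t →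
      Tendsto (fun s => eLpNorm (fun x => u s x - u t x) 2 m)
        (nhdsWithin t (Set.Ici 0)) (nhds 0))
    (hu_bdd : ∀ t : ℝ, 0 ≤ t → ∀ᵐ x ∂m, |u t x| ≤ C)
    (hu_mass : ∀ t : ℝ, 0 ≤ t → eLpNorm (u t) 1 m = eLpNorm (u 0) 1 m) :
    ∀ p : ℝ≥0∞, 1 ≤ p → p ≠ ⊤ → ∀ t : ℝ, 0 ≤ t →
      Tendsto (fun s => eLpNorm (fun x => u s x - u t x) p m)
        (nhdsWithin t (Set.Ici 0)) (nhds 0) := by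
  -- relation between `∫ |h|` and `eLpNorm h 1 m`
  have key : ∀ h : α → ℝ, Integrable h m → ∫ x, |h x| ∂m = (eLpNorm h 1 m).toReal := by
    intro h hh
    simp only [← Real.norm_eq_abs]
    rw [integral_norm_eq_lintegral_enorm hh.aestronglyMeasurable,
      eLpNorm_one_eq_lintegral_enorm]
  -- Step 1: L¹ continuity
  have hL1 : ∀ t : ℝ, 0 ≤ t →
      Tendsto (fun s => eLpNorm (fun x => u s x - u t x) 1 m)
        (nhdsWithin t (Set.Ici 0)) (nhds 0) := by
    intro t ht
    apply tendsto_of_subseq_tendsto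
    intro ns hns
    have hmem : ∀ᶠ n in atTop, ns n ∈ Set.Ici (0 : ℝ) := hns.eventually self_mem_nhdsWithin
    obtain ⟨N, hN⟩ := eventually_atTop.1 hmem
    set v : ℕ → ℝ := fun n => ns (n + N) with hv
    have hv0 : ∀ n, 0 ≤ v n := fun n => hN _ (Nat.le_add_left N n)
    have hvl : Tendsto v atTop (nhdsWithin t (Set.Ici 0)) :=
      hns.comp (tendsto_add_atTop_nat N)
    have h2 : Tendsto (fun n => eLpNorm ((fun x => u (v n) x) - fun x => u t x) 2 m) atTop
        (nhds 0) := by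
      simpa [Pi.sub_def, Function.comp_def] using (hu_cont t ht).comp hvl
    have htm : TendstoInMeasure m (fun n => u (v n)) atTop (u t) :=
      tendstoInMeasure_of_tendsto_eLpNorm (p := 2) (by norm_num)
        (fun n => (hu_mem (v n) (hv0 n)).1.aestronglyMeasurable)
        (hu_mem t ht).1.aestronglyMeasurable h2
    obtain ⟨φ, hφmono, hφae⟩ := htm.exists_seq_tendsto_ae
    refine ⟨fun i => φ i + N, ?_⟩
    have hsch : Tendsto (fun i => ∫ x, |u (v (φ i)) x - u t x| ∂m) atTop (nhds 0) := by
      apply scheffe_aux (fun i => (hu_mem _ (hv0 (φ i))).1) (hu_mem t ht).1 hφae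
      intro i
      rw [key _ (hu_mem _ (hv0 (φ i))).1, key _ (hu_mem t ht).1,
        hu_mass _ (hv0 (φ i)), hu_mass t ht]
    have hform : ∀ i, eLpNorm (fun x => u (v (φ i)) x - u t x) 1 m
        = ENNReal.ofReal (∫ x, |u (v (φ i)) x - u t x| ∂m) := by
      intro i
      have hint : Integrable (fun x => u (v (φ i)) x - u t x) m :=
        (hu_mem _ (hv0 (φ i))).1.sub (hu_mem t ht).1
      rw [eLpNorm_one_eq_lintegral_enorm, ← ofReal_integral_norm_eq_lintegral_enorm hint]
      simp [Real.norm_eq_abs]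
    have : Tendsto (fun i => eLpNorm (fun x => u (v (φ i)) x - u t x) 1 m) atTop (nhds 0) := by
      simp only [hform]
      simpa using ENNReal.tendsto_ofReal hsch
    exact this
  -- Step 2: general p via interpolation with the uniform bound
  intro p hp hpt t ht
  have hp0 : p ≠ 0 := fun h => by simp [h] at hp
  set pr : ℝ := p.toReal with hprdef
  have hpr1 : 1 ≤ pr := by
    have := ENNReal.toReal_mono hpt hp
    simpa using this
  have hprpos : 0 < pr := lt_of_lt_of_le one_pos hpr1
  set B : ℝ≥0∞ := ENNReal.ofReal (2 * C) with hB
  have hBne : B ^ (pr - 1) ≠ ∞ := by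
    apply ENNReal.rpow_ne_top_of_nonneg (by linarith)
    exact ENNReal.ofReal_ne_top
  have hbd : ∀ s : ℝ, 0 ≤ s → ∀ᵐ x ∂m, (‖u s x - u t x‖₊ : ℝ≥0∞) ≤ B := by
    intro s hs
    filter_upwards [hu_bdd s hs, hu_bdd t ht] with x h1 h2
    have h3 : ‖u s x - u t x‖ ≤ 2 * C := by
      calc ‖u s x - u t x‖ ≤ ‖u s x‖ + ‖u t x‖ := norm_sub_le _ _
        _ ≤ 2 * C := by rw [Real.norm_eq_abs, Real.norm_eq_abs]; linarith
    rw [← enorm_eq_nnnorm, ← ofReal_norm_eq_enorm]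
    exact ENNReal.ofReal_le_ofReal h3
  have hkey : ∀ s : ℝ, 0 ≤ s → eLpNorm (fun x => u s x - u t x) p m
      ≤ (B ^ (pr - 1) * eLpNorm (fun x => u s x - u t x) 1 m) ^ (1 / pr) := by
    intro s hs
    rw [eLpNorm_eq_lintegral_rpow_enorm_toReal hp0 hpt, eLpNorm_one_eq_lintegral_enorm]
    simp only [enorm_eq_nnnorm]
    apply ENNReal.rpow_le_rpow _ (by positivity)
    rw [← lintegral_const_mul' _ _ hBne]
    apply lintegral_mono_ae
    filter_upwards [hbd s hs] with x hx
    set a := (‖u s x - u t x‖₊ : ℝ≥0∞) with ha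
    rcases eq_or_ne a 0 with h0 | h0
    · rw [h0, ENNReal.zero_rpow_of_pos hprpos]
      exact zero_le
    · have hane : a ≠ ∞ := ENNReal.coe_ne_top
      calc a ^ pr = a ^ (pr - 1 + 1) := by norm_num
        _ = a ^ (pr - 1) * a ^ (1 : ℝ) := ENNReal.rpow_add _ _ h0 hane
        _ = a ^ (pr - 1) * a := by rw [ENNReal.rpow_one]
        _ ≤ B ^ (pr - 1) * a := mul_le_mul_left (ENNReal.rpow_le_rpow hx (by linarith)) a
  have hg0 : Tendsto (fun s => (B ^ (pr - 1) * eLpNorm (fun x => u s x - u t x) 1 m) ^ (1 / pr))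
      (nhdsWithin t (Set.Ici 0)) (nhds 0) := by
    have h2 : Tendsto (fun s => B ^ (pr - 1) * eLpNorm (fun x => u s x - u t x) 1 m)
        (nhdsWithin t (Set.Ici 0)) (nhds 0) := by
      simpa using ENNReal.Tendsto.const_mul (hL1 t ht) (Or.inr hBne)
    have h3 := (ENNReal.continuous_rpow_const (y := 1 / pr)).tendsto 0 |>.comp h2
    simpa [Function.comp_def, one_div, ENNReal.zero_rpow_of_pos (by positivity : (0:ℝ) < pr⁻¹)] using h3
  refine tendsto_of_tendsto_of_tendsto_of_le_of_le' tendsto_const_nhds hg0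
    (Eventually.of_forall fun s => zero_le) ?_
  filter_upwards [self_mem_nhdsWithin] with s hs
  exact hkey s hs
end

section
/- Let (X,d) be a complete and separable metric space and m a non-negative Borel measure on X which is finite on bounded sets. Let C ≥ 0 and let u : [0,∞) → L¹(m) ∩ L²(m) satisfy: (a) t ↦ u_t is continuous as a map from [0,∞) into L²(m); (b) |u_t| ≤ C m-a.e. for every t ≥ 0; (c) ‖u_t‖_{L¹(m)} = ‖u_0‖_{L¹(m)} for every t ≥ 0. Then for every T > 0, every p ∈ [1,∞) and every ε > 0 there exists a bounded Borel set B ⊆ X such that ∫_{X∖B} |u_t|^p dm < ε for all t ∈ [0,T]. -/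
open MeasureTheory Metric Filter
open scoped ENNReal Topology

set_option linter.unusedVariables false

private lemma abs_rpow_le_aux {y C p : ℝ} (hC : 0 ≤ C) (hyC : |y| ≤ C) (hp : 1 ≤ p) :
    |y| ^ p ≤ C ^ (p - 1) * |y| := by
  rcases eq_or_lt_of_le (abs_nonneg y) with h0 | h0
  · rw [← h0, Real.zero_rpow (by linarith : p ≠ 0), mul_zero]
  · have hsplit : |y| ^ p = |y| ^ (p - 1) * |y| := by
      have h := Real.rpow_add h0 (p - 1) 1
      rw [sub_add_cancel, Real.rpow_one] at h
      exact h
    rw [hsplit]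
    have : |y| ^ (p - 1) ≤ C ^ (p - 1) :=
      Real.rpow_le_rpow (abs_nonneg y) hyC (by linarith)
    exact mul_le_mul_of_nonneg_right this (le_of_lt h0)

private lemma tail_small
    {X : Type*} [MetricSpace X]
    [MeasurableSpace X] [BorelSpace X] (m : Measure X)
    (hm : ∀ s : Set X, Bornology.IsBounded s → m s < ⊤)
    (u : ℝ → X → ℝ)
    (hu_mem : ∀ t : ℝ, 0 ≤ t → Integrable (u t) m)
    (hu_cont : ∀ t : ℝ, 0 ≤ t →
      Tendsto (fun s => eLpNorm (fun x => u s x - u t x) 2 m)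
        (nhdsWithin t (Set.Ici 0)) (nhds 0))
    (hu_mass : ∀ t : ℝ, 0 ≤ t → eLpNorm (u t) 1 m = eLpNorm (u 0) 1 m)
    (T δ : ℝ) (hδ : 0 < δ) :
    ∃ B : Set X, MeasurableSet B ∧ Bornology.IsBounded B ∧
      ∀ t ∈ Set.Icc (0:ℝ) T,
        ∫⁻ x in Bᶜ, ENNReal.ofReal |u t x| ∂m ≤ ENNReal.ofReal δ := by
  have habs : ∀ (r : ℝ), ENNReal.ofReal |r| = ‖r‖ₑ := fun r => by
    rw [← Real.norm_eq_abs, ofReal_norm_eq_enorm]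
  rcases isEmpty_or_nonempty X with hX | hX
  · refine ⟨∅, MeasurableSet.empty, Bornology.isBounded_empty, fun t _ => ?_⟩
    have : m = 0 := by
      ext s hs
      simp [Set.eq_empty_of_isEmpty s]
    simp [this]
  -- setup
  set x₀ : X := Classical.arbitrary X
  set B : ℕ → Set X := fun n => closedBall x₀ n with hB
  have measB : ∀ n, MeasurableSet (B n) := fun n => measurableSet_closedBall
  set F : ℕ → ℝ → ℝ≥0∞ :=
    fun n t => ∫⁻ x in (B n)ᶜ, ENNReal.ofReal |u t x| ∂m with hF
  set G : ℕ → ℝ → ℝ≥0∞ :=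
    fun n t => ∫⁻ x in (B n), ENNReal.ofReal |u t x| ∂m with hG
  set I : ℝ → ℝ≥0∞ := fun t => ∫⁻ x, ENNReal.ofReal |u t x| ∂m with hI
  have haemf : ∀ s : ℝ, 0 ≤ s → AEMeasurable (fun x => ENNReal.ofReal |u s x|) m := by
    intro s hs
    simp only [habs]
    exact (hu_mem s hs).aemeasurable.enorm
  have hIfin : ∀ t, 0 ≤ t → I t < ⊤ := by
    intro t ht
    have := (hu_mem t ht).2
    simp only [hI, habs]
    exact this
  have hsplit : ∀ n t, G n t + F n t = I t := fun n t =>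
    lintegral_add_compl _ (measB n)
  have hGfin : ∀ n t, 0 ≤ t → G n t ≠ ⊤ := by
    intro n t ht
    have : G n t ≤ I t := lintegral_mono_set (Set.subset_univ _) |>.trans_eq (by
      simp [Measure.restrict_univ, hI])
    exact (this.trans_lt (hIfin t ht)).ne
  -- mass conservation in lintegral form
  have hImass : ∀ t, 0 ≤ t → I t = I 0 := by
    intro t ht
    have := hu_mass t ht
    simpa [eLpNorm_one_eq_lintegral_enorm, hI, habs] using this
  -- key comparison estimate
  have key : ∀ n, ∀ s t : ℝ, 0 ≤ s → 0 ≤ t →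
      F n t ≤ F n s +
        eLpNorm (fun x => u t x - u s x) 2 m * (m (B n)) ^ ((1:ℝ)/2) := by
    intro n s t hs ht
    set D : ℝ≥0∞ := ∫⁻ x in B n, ENNReal.ofReal |u t x - u s x| ∂m with hD
    have hGst : G n s ≤ G n t + D := by
      have hmono : ∀ x, ENNReal.ofReal |u s x| ≤
          ENNReal.ofReal |u t x| + ENNReal.ofReal |u t x - u s x| := by
        intro x
        rw [← ENNReal.ofReal_add (abs_nonneg _) (abs_nonneg _)]
        exact ENNReal.ofReal_le_ofReal (by
          have := abs_sub_abs_le_abs_sub (u s x) (u t x)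
          have h2 : |u s x - u t x| = |u t x - u s x| := abs_sub_comm _ _
          nlinarith [abs_nonneg (u t x - u s x), abs_nonneg (u t x)])
      calc G n s ≤ ∫⁻ x in B n,
            (ENNReal.ofReal |u t x| + ENNReal.ofReal |u t x - u s x|) ∂m :=
            lintegral_mono hmono
        _ = G n t + D := lintegral_add_left' ((haemf t ht).restrict) _
    have hDle : D ≤ eLpNorm (fun x => u t x - u s x) 2 m * (m (B n)) ^ ((1:ℝ)/2) := by
      have hDeq : D = eLpNorm (fun x => u t x - u s x) 1 (m.restrict (B n)) := by
        rw [eLpNorm_one_eq_lintegral_enorm]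
        simp [hD, habs]
      have hmeas : AEStronglyMeasurable (fun x => u t x - u s x) (m.restrict (B n)) :=
        ((hu_mem t ht).aestronglyMeasurable.sub
          (hu_mem s hs).aestronglyMeasurable).restrict
      have h1 := eLpNorm_le_eLpNorm_mul_rpow_measure_univ (p := 1) (q := 2)
        (by norm_num) hmeas
      rw [hDeq]
      refine h1.trans ?_
      have hexp : (1 / (1:ℝ≥0∞).toReal - 1 / (2:ℝ≥0∞).toReal) = (1:ℝ)/2 := by norm_num
      rw [hexp, Measure.restrict_apply_univ]
      exact mul_le_mul_left
        (eLpNorm_mono_measure _ Measure.restrict_le_self) _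
    -- combine
    have h1 : F n t + G n t ≤ (F n s +
        eLpNorm (fun x => u t x - u s x) 2 m * (m (B n)) ^ ((1:ℝ)/2)) + G n t := by
      calc F n t + G n t = G n t + F n t := add_comm _ _
        _ = I t := hsplit n t
        _ = I s := by rw [hImass t ht, hImass s hs]
        _ = G n s + F n s := (hsplit n s).symm
        _ ≤ (G n t + D) + F n s := add_le_add_left hGst _
        _ ≤ (G n t + eLpNorm (fun x => u t x - u s x) 2 m * (m (B n)) ^ ((1:ℝ)/2)) + F n s :=
            add_le_add_left (add_le_add_right hDle _) _
        _ = (F n s + eLpNorm (fun x => u t x - u s x) 2 m * (m (B n)) ^ ((1:ℝ)/2)) + G n t := by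
            ring
    exact (ENNReal.add_le_add_iff_right (hGfin n t ht)).mp h1
  -- pointwise convergence of tails to zero
  have hlim : ∀ t, 0 ≤ t → Tendsto (fun n => F n t) atTop (𝓝 0) := by
    intro t ht
    have heq : ∀ n, F n t = ∫⁻ x, ((B n)ᶜ).indicator
        (fun x => ENNReal.ofReal |u t x|) x ∂m := by
      intro n
      rw [lintegral_indicator (measB n).compl]
    simp only [heq]
    have h0 : (0:ℝ≥0∞) = ∫⁻ x, (0:ℝ≥0∞) ∂m := by simp
    rw [h0]
    apply tendsto_lintegral_of_dominated_convergence' (fun x => ENNReal.ofReal |u t x|)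
    · intro n
      exact (haemf t ht).indicator (measB n).compl
    · intro n
      filter_upwards with x
      exact Set.indicator_le_self _ _ x
    · have := hIfin t ht
      exact this.ne
    · filter_upwards with x
      have hev : ∀ᶠ n in atTop, ((B n)ᶜ).indicator
          (fun x => ENNReal.ofReal |u t x|) x = 0 := by
        obtain ⟨N, hN⟩ := exists_nat_ge (dist x x₀)
        filter_upwards [eventually_ge_atTop N] with n hn
        have hx : x ∈ B n := by
          simp only [hB, mem_closedBall]
          exact hN.trans (by exact_mod_cast hn)
        simp [Set.indicator_of_notMem, hx]
      exact Tendsto.congr' (by filter_upwards [hev] with n h using h.symm) tendsto_const_nhds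
  -- the compactness argument
  set δ' : ℝ≥0∞ := ENNReal.ofReal δ with hδ'
  have hδ'0 : δ' ≠ 0 := by simp [hδ', hδ]
  have hFanti : ∀ {n n' : ℕ}, n ≤ n' → ∀ t, F n' t ≤ F n t := by
    intro n n' hnn' t
    apply lintegral_mono_set
    apply Set.compl_subset_compl.mpr
    exact closedBall_subset_closedBall (by exact_mod_cast hnn')
  have main : ∃ n : ℕ, ∀ t ∈ Set.Icc (0:ℝ) T, 0 ≤ t → F n t ≤ δ' := by
    refine IsCompact.induction_on (isCompact_Icc (a := (0:ℝ)) (b := T))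
      (p := fun s => ∃ n : ℕ, ∀ t ∈ s, 0 ≤ t → F n t ≤ δ') ⟨0, by simp⟩
      (fun s t hst ⟨n, hn⟩ => ⟨n, fun r hr h0 => hn r (hst hr) h0⟩)
      (fun s t ⟨n₁, h₁⟩ ⟨n₂, h₂⟩ => ⟨max n₁ n₂, fun r hr h0 => by
        rcases hr with hr | hr
        · exact (hFanti (le_max_left n₁ n₂) r).trans (h₁ r hr h0)
        · exact (hFanti (le_max_right n₁ n₂) r).trans (h₂ r hr h0)⟩)
      (fun x hx => ?_)
    have hx0 : (0:ℝ) ≤ x := hx.1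
    -- choose n with F n x < δ'/2
    have hhalf : 0 < δ' / 2 := ENNReal.half_pos hδ'0
    obtain ⟨n, hn⟩ := ((hlim x hx0).eventually_lt_const hhalf).exists
    -- eventual closeness
    have hmB : m (B n) ^ ((1:ℝ)/2) ≠ ⊤ := by
      apply ENNReal.rpow_ne_top_of_nonneg (by norm_num)
      exact (hm _ (isBounded_closedBall)).ne
    have htend : Tendsto (fun s => eLpNorm (fun y => u s y - u x y) 2 m
        * (m (B n)) ^ ((1:ℝ)/2)) (nhdsWithin x (Set.Ici 0)) (𝓝 0) := by
      have := ENNReal.Tendsto.mul_const (hu_cont x hx0) (Or.inr hmB)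
      simpa using this
    have hev : ∀ᶠ s in nhdsWithin x (Set.Ici 0),
        eLpNorm (fun y => u s y - u x y) 2 m * (m (B n)) ^ ((1:ℝ)/2) < δ' / 2 :=
      htend.eventually_lt_const hhalf
    have hev2 : ∀ᶠ s in nhdsWithin x (Set.Icc 0 T),
        eLpNorm (fun y => u s y - u x y) 2 m * (m (B n)) ^ ((1:ℝ)/2) < δ' / 2 :=
      hev.filter_mono (nhdsWithin_mono x Set.Icc_subset_Ici_self)
    refine ⟨{s | eLpNorm (fun y => u s y - u x y) 2 m * (m (B n)) ^ ((1:ℝ)/2) < δ' / 2},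
      hev2, n, fun t ht h0 => ?_⟩
    calc F n t ≤ F n x +
        eLpNorm (fun y => u t y - u x y) 2 m * (m (B n)) ^ ((1:ℝ)/2) := key n x t hx0 h0
      _ ≤ δ' / 2 + δ' / 2 := add_le_add hn.le ht.le
      _ = δ' := ENNReal.add_halves δ'
  obtain ⟨n, hn⟩ := main
  exact ⟨B n, measB n, isBounded_closedBall, fun t ht => hn t ht ht.1⟩

/-- **Uniform integrability outside a bounded set.**
Let `(X, d)` be a complete separable metric space and `m` a nonnegative Borel measure
which is finite on bounded sets.  Let `C ≥ 0` and `u : [0,∞) → L¹(m) ∩ L²(m)` satisfy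
(a) `t ↦ u t` is continuous into `L²(m)`;
(b) `|u t| ≤ C` m-a.e. for every `t ≥ 0`;
(c) `‖u t‖_{L¹(m)} = ‖u 0‖_{L¹(m)}` for every `t ≥ 0`.
Then for every `T > 0`, `p ∈ [1,∞)` and `ε > 0` there is a bounded Borel set `B ⊆ X`
such that `∫_{X∖B} |u t|^p dm < ε` for all `t ∈ [0,T]`. -/
theorem uniform_integrability_outside_bounded_set
    {X : Type*} [MetricSpace X] [CompleteSpace X] [TopologicalSpace.SeparableSpace X]
    [MeasurableSpace X] [BorelSpace X] (m : Measure X)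
    (hm : ∀ s : Set X, Bornology.IsBounded s → m s < ⊤)
    (C : ℝ) (hC : 0 ≤ C) (u : ℝ → X → ℝ)
    (hu_mem : ∀ t : ℝ, 0 ≤ t → Integrable (u t) m ∧ MemLp (u t) 2 m)
    (hu_cont : ∀ t : ℝ, 0 ≤ t →
      Tendsto (fun s => eLpNorm (fun x => u s x - u t x) 2 m)
        (nhdsWithin t (Set.Ici 0)) (nhds 0))
    (hu_bdd : ∀ t : ℝ, 0 ≤ t → ∀ᵐ x ∂m, |u t x| ≤ C)
    (hu_mass : ∀ t : ℝ, 0 ≤ t → eLpNorm (u t) 1 m = eLpNorm (u 0) 1 m) :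
    ∀ T > (0 : ℝ), ∀ p : ℝ, 1 ≤ p → ∀ ε > (0 : ℝ),
      ∃ B : Set X, MeasurableSet B ∧ Bornology.IsBounded B ∧
        ∀ t ∈ Set.Icc (0 : ℝ) T,
          ∫⁻ x in Bᶜ, ENNReal.ofReal (|u t x| ^ p) ∂m < ENNReal.ofReal ε := by
  intro T hT p hp ε hε
  set K : ℝ := C ^ (p - 1) with hK
  have hK0 : 0 ≤ K := Real.rpow_nonneg hC _
  set δ : ℝ := ε / (2 * (K + 1)) with hδdef
  have hδ : 0 < δ := by positivity
  obtain ⟨B, hBmeas, hBbdd, hB⟩ := tail_small m hm u (fun t ht => (hu_mem t ht).1)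
    hu_cont hu_mass T δ hδ
  refine ⟨B, hBmeas, hBbdd, fun t ht => ?_⟩
  have h0t : (0:ℝ) ≤ t := ht.1
  -- pointwise a.e. bound
  have hae : ∀ᵐ x ∂(m.restrict Bᶜ),
      ENNReal.ofReal (|u t x| ^ p) ≤ ENNReal.ofReal K * ENNReal.ofReal |u t x| := by
    filter_upwards [ae_restrict_of_ae (hu_bdd t h0t)] with x hx
    rw [← ENNReal.ofReal_mul hK0]
    exact ENNReal.ofReal_le_ofReal (abs_rpow_le_aux hC hx hp)
  calc ∫⁻ x in Bᶜ, ENNReal.ofReal (|u t x| ^ p) ∂m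
      ≤ ∫⁻ x in Bᶜ, ENNReal.ofReal K * ENNReal.ofReal |u t x| ∂m := lintegral_mono_ae hae
    _ = ENNReal.ofReal K * ∫⁻ x in Bᶜ, ENNReal.ofReal |u t x| ∂m :=
        lintegral_const_mul' _ _ ENNReal.ofReal_ne_top
    _ ≤ ENNReal.ofReal K * ENNReal.ofReal δ := mul_le_mul_right (hB t ht) _
    _ = ENNReal.ofReal (K * δ) := (ENNReal.ofReal_mul hK0).symm
    _ ≤ ENNReal.ofReal (ε / 2) := by
        apply ENNReal.ofReal_le_ofReal
        have h1 : (0:ℝ) < K + 1 := by linarith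
        have h2 : K * (ε / (2 * (K + 1))) = (K / (K + 1)) * (ε / 2) := by
          field_simp
        rw [hδdef, h2]
        have h3 : K / (K + 1) ≤ 1 := by
          rw [div_le_one h1]; linarith
        nlinarith
    _ < ENNReal.ofReal ε := by
        rw [ENNReal.ofReal_lt_ofReal_iff hε]
        linarith
end

section
/- Let (X,d) be a complete and separable metric space and m a non-negative Borel measure on X which is finite on bounded sets. Fix t > 0, c > 0 and x ∈ X with m(B_{√(2t)}(x)) > 0. Let k : X × X → (0,∞) be measurable with ∫ k(w,y) dm(y) = 1 for every w ∈ X, and set P f(w) := ∫ f(y)·k(w,y) dm(y). Assume that P satisfies the dimension-free Harnack inequality with constant c > 0, i.e. |P f(w)|^p ≤ P(|f|^p)(z) · exp(p·c·d(w,z)²/(2·(p−1))) for every p ∈ (1,∞), every w,z ∈ X and every f ∈ L¹(m) ∩ L∞(m). Fix p ∈ (1,2), set q := p/(2(p−1)), let T > q·t, and assume the integral maximum principle: for every non-negative g ∈ L^p(m) it holds ∫ (Pg)^p(y)·exp(−d(x,y)²/(2(T−qt))) dm(y) ≤ ∫ g^p(y)·exp(−d(x,y)²/(2T)) dm(y).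 Then ∫ k(x,y)²·exp(d(x,y)²/(2T)) dm(y) ≤ m(B_{√(2t)}(x))^{−1} · exp( t/(T−qt) + 2·p·c·t/(2−p) ). -/
open MeasureTheory Metric
open scoped ENNReal

/-- **Gaussian-weighted L² bound for the kernel.**
Let `(X, d)` be a complete separable metric space and `m` a nonnegative Borel measure which is
finite on bounded sets.  Fix `t > 0`, `c > 0` and `x ∈ X` with `m(B_{√(2t)}(x)) > 0`.
Let `k : X × X → (0,∞)` be measurable with `∫ k(w,y) dm(y) = 1` for every `w`, and set
`P f (w) := ∫ f(y) k(w,y) dm(y)`.  Assume the dimension-free Harnack inequality with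
constant `c`.  Fix `p ∈ (1,2)`, set `q := p/(2(p-1))`, let `T > q t`, and assume the
integral maximum principle: for every nonnegative `g ∈ L^p(m)`,
`∫ (Pg)^p(y) exp(-d(x,y)²/(2(T-qt))) dm(y) ≤ ∫ g^p(y) exp(-d(x,y)²/(2T)) dm(y)`.
Then `∫ k(x,y)² exp(d(x,y)²/(2T)) dm(y) ≤ m(B_{√(2t)}(x))⁻¹ exp(t/(T-qt) + 2pct/(2-p))`. -/
theorem gaussian_weighted_L2_bound
    {X : Type*} [MetricSpace X] [CompleteSpace X] [TopologicalSpace.SeparableSpace X]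
    [MeasurableSpace X] [BorelSpace X] (m : Measure X)
    (hm : ∀ s : Set X, Bornology.IsBounded s → m s < ⊤)
    (t : ℝ) (ht : 0 < t) (c : ℝ) (hc : 0 < c) (x : X)
    (hball : 0 < m (ball x (Real.sqrt (2 * t))))
    (k : X → X → ℝ)
    (hk_meas : Measurable (fun p : X × X => k p.1 p.2))
    (hk_pos : ∀ w y, 0 < k w y)
    (hk_prob : ∀ w : X, ∫ y, k w y ∂m = 1)
    (P : (X → ℝ) → X → ℝ)
    (hP : ∀ (f : X → ℝ) (w : X), P f w = ∫ y, f y * k w y ∂m)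
    (harnack : ∀ p : ℝ, 1 < p → ∀ w z : X, ∀ f : X → ℝ,
      Integrable f m → MemLp f ⊤ m →
      |P f w| ^ p ≤ P (fun u => |f u| ^ p) z *
        Real.exp (p * c * dist w z ^ 2 / (2 * (p - 1))))
    (p : ℝ) (hp1 : 1 < p) (hp2 : p < 2)
    (q : ℝ) (hq : q = p / (2 * (p - 1)))
    (T : ℝ) (hT : q * t < T)
    (maxprin : ∀ g : X → ℝ, (∀ y, 0 ≤ g y) → MemLp g (ENNReal.ofReal p) m →
      ∫⁻ y, ENNReal.ofReal
          ((P g y) ^ p * Real.exp (-dist x y ^ 2 / (2 * (T - q * t)))) ∂m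
        ≤ ∫⁻ y, ENNReal.ofReal
            ((g y) ^ p * Real.exp (-dist x y ^ 2 / (2 * T))) ∂m) :
    ∫⁻ y, ENNReal.ofReal (k x y ^ 2 * Real.exp (dist x y ^ 2 / (2 * T))) ∂m
      ≤ ENNReal.ofReal (Real.exp (t / (T - q * t) + 2 * p * c * t / (2 - p))) /
        m (ball x (Real.sqrt (2 * t))) := by
  have hp0 : (0:ℝ) < p := lt_trans one_pos hp1
  have hp2' : (0:ℝ) < 2 - p := by linarith
  have hq0 : 0 < q := by rw [hq]; exact div_pos hp0 (by linarith)
  have hTq : 0 < T - q * t := by have := mul_pos hq0 ht; linarith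
  have hT0 : 0 < T := by nlinarith [mul_pos hq0 ht]
  set B := ball x (Real.sqrt (2 * t)) with hBdef
  have hmB_ne_top : m B ≠ ⊤ := (hm _ isBounded_ball).ne
  have hmB_ne : m B ≠ 0 := hball.ne'
  have hkxm : Measurable fun y => k x y := hk_meas.comp measurable_prodMk_left
  have hkx_int : Integrable (fun y => k x y) m := by
    by_contra h
    have h0 := integral_undef h
    rw [hk_prob x] at h0; norm_num at h0
  -- the truncated test functions
  set f : ℕ → X → ℝ := fun n => (ball x (n:ℝ)).indicator
      (fun y => min (k x y) (n:ℝ) * Real.exp (dist x y ^ 2 / (2 * T))) with hfdef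
  have hfmeas : ∀ n : ℕ, Measurable (f n) := by
    intro n
    apply Measurable.indicator _ measurableSet_ball
    fun_prop
  have hfnn : ∀ n y, 0 ≤ f n y := by
    intro n y
    apply Set.indicator_nonneg
    intro y _
    exact mul_nonneg (le_min (hk_pos x _).le (Nat.cast_nonneg n)) (Real.exp_pos _).le
  have hfle : ∀ n y, f n y ≤ k x y * Real.exp (dist x y ^ 2 / (2 * T)) := by
    intro n y
    by_cases hy : y ∈ ball x (n:ℝ)
    · rw [hfdef]; simp only [Set.indicator_of_mem hy]
      exact mul_le_mul_of_nonneg_right (min_le_left _ _) (Real.exp_pos _).le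
    · rw [hfdef]; simp only [Set.indicator_of_notMem hy]
      exact mul_nonneg (hk_pos x y).le (Real.exp_pos _).le
  -- the bounding constants
  set C : ℕ → ℝ := fun n => (n:ℝ) * Real.exp ((n:ℝ) ^ 2 / (2 * T)) with hCdef
  have hC0 : ∀ n, 0 ≤ C n := fun n => by rw [hCdef]; positivity
  have hfbd : ∀ (n : ℕ) (y : X), y ∈ ball x (n:ℝ) →
      min (k x y) (n:ℝ) * Real.exp (dist x y ^ 2 / (2 * T)) ≤ C n := by
    intro n y hy
    have hd : dist x y ^ 2 ≤ (n:ℝ) ^ 2 := by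
      have h1 : dist x y < (n:ℝ) := by rw [dist_comm]; exact mem_ball.mp hy
      exact pow_le_pow_left₀ dist_nonneg h1.le 2
    refine mul_le_mul (min_le_right _ _) (Real.exp_le_exp.mpr ?_) (Real.exp_pos _).le
      (Nat.cast_nonneg n)
    gcongr
  have hfbd' : ∀ (n : ℕ) (y : X), ‖f n y‖ ≤
      ((ball x (n:ℝ)).indicator (fun _ => C n)) y := by
    intro n y
    by_cases hy : y ∈ ball x (n:ℝ)
    · rw [hfdef]
      simp only [Set.indicator_of_mem hy, Real.norm_eq_abs]
      rw [abs_of_nonneg (mul_nonneg (le_min (hk_pos x _).le (Nat.cast_nonneg n))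
        (Real.exp_pos _).le)]
      exact hfbd n y hy
    · rw [hfdef]; simp only [Set.indicator_of_notMem hy, norm_zero]
      exact le_rfl
  have hfmem : ∀ (n : ℕ) (r : ℝ≥0∞), MemLp (f n) r m := by
    intro n r
    have hInd : MemLp ((ball x (n:ℝ)).indicator (fun _ => C n)) r m :=
      memLp_indicator_const r measurableSet_ball _ (Or.inr (hm _ isBounded_ball).ne)
    refine hInd.of_le (hfmeas n).aestronglyMeasurable ?_
    filter_upwards with y
    refine (hfbd' n y).trans ?_
    rw [Real.norm_eq_abs]
    exact le_abs_self _
  -- the rescaled functions g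
  set g : ℕ → X → ℝ := fun n y => f n y ^ (2 / p : ℝ) with hgdef
  have h2pne : (2 / p : ℝ) ≠ 0 := by positivity
  have hgnn : ∀ n y, 0 ≤ g n y := fun n y => Real.rpow_nonneg (hfnn n y) _
  have hgmeas : ∀ n, Measurable (g n) := by
    intro n
    rw [hgdef]
    have := hfmeas n
    fun_prop
  have hgmem : ∀ n, MemLp (g n) (ENNReal.ofReal p) m := by
    intro n
    have hInd : MemLp ((ball x (n:ℝ)).indicator (fun _ => C n ^ (2 / p : ℝ)))
        (ENNReal.ofReal p) m :=
      memLp_indicator_const _ measurableSet_ball _ (Or.inr (hm _ isBounded_ball).ne)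
    refine hInd.of_le (hgmeas n).aestronglyMeasurable ?_
    filter_upwards with y
    by_cases hy : y ∈ ball x (n:ℝ)
    · rw [Set.indicator_of_mem hy, Real.norm_eq_abs, Real.norm_eq_abs,
        abs_of_nonneg (hgnn n y), abs_of_nonneg (Real.rpow_nonneg (hC0 n) _)]
      refine Real.rpow_le_rpow (hfnn n y) ?_ (by positivity)
      have h := hfbd' n y
      rwa [Set.indicator_of_mem hy, Real.norm_eq_abs, abs_of_nonneg (hfnn n y)] at h
    · rw [Set.indicator_of_notMem hy]
      have hf0 : f n y = 0 := by rw [hfdef]; exact Set.indicator_of_notMem hy _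
      rw [hgdef]
      simp [hf0, Real.zero_rpow h2pne]
  -- the key bound for each n
  have key : ∀ n : ℕ,
      ∫⁻ y, ENNReal.ofReal (f n y * k x y) ∂m
        ≤ ENNReal.ofReal (Real.exp (t / (T - q * t) + 2 * p * c * t / (2 - p))) / m B := by
    intro n
    have hint : Integrable (fun y => f n y * k x y) m := by
      refine hkx_int.bdd_mul (c := C n) (hfmeas n).aestronglyMeasurable
        (Filter.Eventually.of_forall fun y => ?_)
      refine (hfbd' n y).trans ?_
      by_cases hy : y ∈ ball x (n:ℝ)
      · rw [Set.indicator_of_mem hy]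
      · rw [Set.indicator_of_notMem hy]; exact hC0 n
    set A : ℝ := ∫ y, f n y * k x y ∂m with hAdef
    have hA0 : 0 ≤ A := integral_nonneg fun y => mul_nonneg (hfnn n y) (hk_pos x y).le
    have hPA : P (f n) x = A := hP (f n) x
    have IA : ∫⁻ y, ENNReal.ofReal (f n y * k x y) ∂m = ENNReal.ofReal A :=
      (ofReal_integral_eq_lintegral_ofReal hint
        (Filter.Eventually.of_forall fun y => mul_nonneg (hfnn n y) (hk_pos x y).le)).symm
    -- pointwise Harnack estimate on the ball B
    have hptwise : ∀ z ∈ B,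
        ENNReal.ofReal (A * A * Real.exp (-t / (T - q * t)))
          ≤ ENNReal.ofReal ((P (g n) z) ^ p *
              Real.exp (-dist x z ^ 2 / (2 * (T - q * t))))
            * ENNReal.ofReal (Real.exp (2 * p * c * t / (2 - p))) := by
      intro z hz
      have hdz : dist x z ^ 2 ≤ 2 * t := by
        have h1 : dist x z < Real.sqrt (2 * t) := by rw [dist_comm]; exact mem_ball.mp hz
        calc dist x z ^ 2 ≤ Real.sqrt (2 * t) ^ 2 := pow_le_pow_left₀ dist_nonneg h1.le 2
          _ = 2 * t := Real.sq_sqrt (by positivity)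
      have hPg0 : 0 ≤ P (g n) z := by
        rw [hP]
        exact integral_nonneg fun y => mul_nonneg (hgnn n y) (hk_pos z y).le
      have h2p' : (1:ℝ) < 2 / p := (one_lt_div hp0).mpr hp2
      have h1 := harnack (2 / p) h2p' x z (f n)
        (memLp_one_iff_integrable.mp (hfmem n 1)) (hfmem n ⊤)
      have habs : (fun u => |f n u| ^ (2 / p : ℝ)) = g n :=
        funext fun u => by rw [hgdef, abs_of_nonneg (hfnn n u)]
      rw [habs, hPA] at h1
      have hexp_eq : 2 / p * c * dist x z ^ 2 / (2 * (2 / p - 1))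
          = c * dist x z ^ 2 / (2 - p) := by
        have hpos : (0:ℝ) < 2 / p - 1 := by linarith [(one_lt_div hp0).mpr hp2]
        rw [div_eq_div_iff (by positivity) hp2'.ne']
        field_simp
      rw [hexp_eq] at h1
      -- raise to the power p
      have h2 : (|A| ^ (2 / p : ℝ)) ^ p
          ≤ (P (g n) z * Real.exp (c * dist x z ^ 2 / (2 - p))) ^ p :=
        Real.rpow_le_rpow (Real.rpow_nonneg (abs_nonneg _) _) h1 hp0.le
      have hLeq : (|A| ^ (2 / p : ℝ)) ^ p = A * A := by
        rw [← Real.rpow_mul (abs_nonneg A), div_mul_cancel₀ _ hp0.ne',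
          abs_of_nonneg hA0, show (2:ℝ) = ((2:ℕ):ℝ) by norm_num, Real.rpow_natCast]
        ring
      have hReq : (P (g n) z * Real.exp (c * dist x z ^ 2 / (2 - p))) ^ p
          = (P (g n) z) ^ p * Real.exp (p * (c * dist x z ^ 2 / (2 - p))) := by
        rw [Real.mul_rpow hPg0 (Real.exp_pos _).le, ← Real.exp_mul,
          mul_comm (c * dist x z ^ 2 / (2 - p)) p]
      rw [hLeq, hReq] at h2
      have hE1 : Real.exp (p * (c * dist x z ^ 2 / (2 - p)))
          ≤ Real.exp (2 * p * c * t / (2 - p)) := by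
        apply Real.exp_le_exp.mpr
        rw [show p * (c * dist x z ^ 2 / (2 - p)) = p * c * dist x z ^ 2 / (2 - p) by ring]
        have hnum : p * c * dist x z ^ 2 ≤ 2 * p * c * t := by nlinarith [mul_pos hp0 hc]
        gcongr
      have hE2 : Real.exp (-t / (T - q * t))
          ≤ Real.exp (-dist x z ^ 2 / (2 * (T - q * t))) := by
        apply Real.exp_le_exp.mpr
        rw [neg_div, neg_div, neg_le_neg_iff]
        rw [div_le_div_iff₀ (by positivity) hTq]
        nlinarith
      have hcomb : A * A * Real.exp (-t / (T - q * t))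
          ≤ (P (g n) z) ^ p * Real.exp (-dist x z ^ 2 / (2 * (T - q * t)))
              * Real.exp (2 * p * c * t / (2 - p)) := by
        have hAA : A * A ≤ (P (g n) z) ^ p * Real.exp (2 * p * c * t / (2 - p)) :=
          h2.trans (mul_le_mul_of_nonneg_left hE1 (Real.rpow_nonneg hPg0 _))
        calc A * A * Real.exp (-t / (T - q * t))
            ≤ ((P (g n) z) ^ p * Real.exp (2 * p * c * t / (2 - p)))
                * Real.exp (-dist x z ^ 2 / (2 * (T - q * t))) :=
              mul_le_mul hAA hE2 (Real.exp_pos _).le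
                (mul_nonneg (Real.rpow_nonneg hPg0 _) (Real.exp_pos _).le)
          _ = _ := by ring
      calc ENNReal.ofReal (A * A * Real.exp (-t / (T - q * t)))
          ≤ ENNReal.ofReal ((P (g n) z) ^ p * Real.exp (-dist x z ^ 2 / (2 * (T - q * t)))
              * Real.exp (2 * p * c * t / (2 - p))) := ENNReal.ofReal_le_ofReal hcomb
        _ = _ := ENNReal.ofReal_mul
            (mul_nonneg (Real.rpow_nonneg hPg0 _) (Real.exp_pos _).le)
    -- integrate over the ball B
    have step1 : ENNReal.ofReal (A * A * Real.exp (-t / (T - q * t))) * m B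
        ≤ (∫⁻ z, ENNReal.ofReal ((P (g n) z) ^ p *
              Real.exp (-dist x z ^ 2 / (2 * (T - q * t)))) ∂m)
            * ENNReal.ofReal (Real.exp (2 * p * c * t / (2 - p))) := by
      rw [← lintegral_indicator_const measurableSet_ball,
        ← lintegral_mul_const' _ _ ENNReal.ofReal_ne_top]
      refine lintegral_mono fun z => ?_
      by_cases hz : z ∈ B
      · rw [Set.indicator_of_mem hz]; exact hptwise z hz
      · rw [Set.indicator_of_notMem hz]; exact zero_le
    -- apply the integral maximum principle
    have step2 : (∫⁻ z, ENNReal.ofReal ((P (g n) z) ^ p *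
          Real.exp (-dist x z ^ 2 / (2 * (T - q * t)))) ∂m)
        ≤ ENNReal.ofReal A := by
      refine le_trans (maxprin (g n) (hgnn n) (hgmem n)) ?_
      rw [← IA]
      refine lintegral_mono fun y => ENNReal.ofReal_le_ofReal ?_
      have hgy : (g n y) ^ p = f n y * f n y := by
        rw [hgdef]
        show ((f n y) ^ (2 / p : ℝ)) ^ p = _
        rw [← Real.rpow_mul (hfnn n y), div_mul_cancel₀ _ hp0.ne',
          show (2:ℝ) = ((2:ℕ):ℝ) by norm_num, Real.rpow_natCast]
        ring
      rw [hgy]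
      have hker : f n y * Real.exp (-dist x y ^ 2 / (2 * T)) ≤ k x y := by
        have h1 := mul_le_mul_of_nonneg_right (hfle n y)
          (Real.exp_pos (-dist x y ^ 2 / (2 * T))).le
        calc f n y * Real.exp (-dist x y ^ 2 / (2 * T))
            ≤ k x y * Real.exp (dist x y ^ 2 / (2 * T))
                * Real.exp (-dist x y ^ 2 / (2 * T)) := h1
          _ = k x y := by
              rw [mul_assoc, ← Real.exp_add,
                show dist x y ^ 2 / (2 * T) + -dist x y ^ 2 / (2 * T) = 0 by ring,
                Real.exp_zero, mul_one]
      calc f n y * f n y * Real.exp (-dist x y ^ 2 / (2 * T))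
          = f n y * (f n y * Real.exp (-dist x y ^ 2 / (2 * T))) := by ring
        _ ≤ f n y * k x y := mul_le_mul_of_nonneg_left hker (hfnn n y)
    -- combine and solve for the integral
    rw [IA]
    have hchain : ENNReal.ofReal (A * A * Real.exp (-t / (T - q * t))) * m B
        ≤ ENNReal.ofReal A * ENNReal.ofReal (Real.exp (2 * p * c * t / (2 - p))) :=
      step1.trans (mul_le_mul_left step2 _)
    rcases eq_or_ne (ENNReal.ofReal A) 0 with h0 | h0
    · rw [h0]; exact zero_le
    have hIne : ENNReal.ofReal A ≠ ⊤ := ENNReal.ofReal_ne_top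
    rw [ENNReal.ofReal_mul (mul_nonneg hA0 hA0), ENNReal.ofReal_mul hA0] at hchain
    have hcancel : ENNReal.ofReal A * (ENNReal.ofReal (Real.exp (-t / (T - q * t))) * m B)
        ≤ ENNReal.ofReal (Real.exp (2 * p * c * t / (2 - p))) := by
      refine (ENNReal.mul_le_mul_iff_left h0 hIne).mp ?_
      calc ENNReal.ofReal A * (ENNReal.ofReal (Real.exp (-t / (T - q * t))) * m B)
            * ENNReal.ofReal A
          = ENNReal.ofReal A * ENNReal.ofReal A
              * ENNReal.ofReal (Real.exp (-t / (T - q * t))) * m B := by ring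
        _ ≤ ENNReal.ofReal A * ENNReal.ofReal (Real.exp (2 * p * c * t / (2 - p))) := hchain
        _ = ENNReal.ofReal (Real.exp (2 * p * c * t / (2 - p))) * ENNReal.ofReal A :=
            mul_comm _ _
    rw [ENNReal.le_div_iff_mul_le (Or.inl hmB_ne) (Or.inl hmB_ne_top)]
    have hEne : ENNReal.ofReal (Real.exp (-t / (T - q * t))) ≠ 0 :=
      (ENNReal.ofReal_pos.mpr (Real.exp_pos _)).ne'
    refine (ENNReal.mul_le_mul_iff_left hEne ENNReal.ofReal_ne_top).mp ?_
    calc ENNReal.ofReal A * m B * ENNReal.ofReal (Real.exp (-t / (T - q * t)))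
        = ENNReal.ofReal A * (ENNReal.ofReal (Real.exp (-t / (T - q * t))) * m B) := by ring
      _ ≤ ENNReal.ofReal (Real.exp (2 * p * c * t / (2 - p))) := hcancel
      _ = ENNReal.ofReal (Real.exp (t / (T - q * t) + 2 * p * c * t / (2 - p)))
            * ENNReal.ofReal (Real.exp (-t / (T - q * t))) := by
          rw [← ENNReal.ofReal_mul (Real.exp_pos _).le, ← Real.exp_add]
          congr 1
          ring
  -- monotone convergence
  have hmono : Monotone fun n : ℕ => fun y => ENNReal.ofReal (f n y * k x y) := by
    intro n n' hn y
    refine ENNReal.ofReal_le_ofReal (mul_le_mul_of_nonneg_right ?_ (hk_pos x y).le)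
    by_cases hy : y ∈ ball x (n:ℝ)
    · have hy' : y ∈ ball x (n':ℝ) :=
        ball_subset_ball (by exact_mod_cast hn) hy
      rw [hfdef]
      simp only [Set.indicator_of_mem hy, Set.indicator_of_mem hy']
      exact mul_le_mul_of_nonneg_right
        (min_le_min le_rfl (by exact_mod_cast hn)) (Real.exp_pos _).le
    · rw [hfdef]
      simp only [Set.indicator_of_notMem hy]
      exact hfnn n' y
  have hsup_eq : ∀ y, (⨆ n : ℕ, ENNReal.ofReal (f n y * k x y))
      = ENNReal.ofReal (k x y ^ 2 * Real.exp (dist x y ^ 2 / (2 * T))) := by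
    intro y
    apply le_antisymm
    · refine iSup_le fun n => ENNReal.ofReal_le_ofReal ?_
      calc f n y * k x y ≤ k x y * Real.exp (dist x y ^ 2 / (2 * T)) * k x y :=
          mul_le_mul_of_nonneg_right (hfle n y) (hk_pos x y).le
        _ = k x y ^ 2 * Real.exp (dist x y ^ 2 / (2 * T)) := by ring
    · set n₀ : ℕ := ⌈k x y⌉₊ + ⌈dist x y⌉₊ + 1 with hn₀
      have h1 : k x y ≤ (n₀:ℝ) := by
        refine (Nat.le_ceil _).trans ?_
        exact_mod_cast Nat.le_add_right _ _ |>.trans (Nat.le_succ _)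
      have h2 : dist x y < (n₀:ℝ) := by
        refine (Nat.le_ceil _).trans_lt ?_
        exact_mod_cast Nat.lt_succ_of_le (Nat.le_add_left _ _)
      have hy : y ∈ ball x (n₀:ℝ) := mem_ball.mpr (by rw [dist_comm]; exact h2)
      have hfeq : f n₀ y = k x y * Real.exp (dist x y ^ 2 / (2 * T)) := by
        rw [hfdef]
        simp only [Set.indicator_of_mem hy, min_eq_left h1]
      refine le_iSup_of_le n₀ (le_of_eq ?_)
      rw [hfeq]
      congr 1
      ring
  calc ∫⁻ y, ENNReal.ofReal (k x y ^ 2 * Real.exp (dist x y ^ 2 / (2 * T))) ∂m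
      = ∫⁻ y, ⨆ n : ℕ, ENNReal.ofReal (f n y * k x y) ∂m :=
        lintegral_congr fun y => (hsup_eq y).symm
    _ = ⨆ n : ℕ, ∫⁻ y, ENNReal.ofReal (f n y * k x y) ∂m :=
        lintegral_iSup (fun n => ((hfmeas n).mul hkxm).ennreal_ofReal) hmono
    _ ≤ _ := iSup_le key
end
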